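/- Let M > 1, n ≥ 1 a natural number, v ≥ 0 with (n−1)·M·v ≤ (M−1)·n, and let α be any real number with 1/M ≤ α < 1. Then the quadratic q (in the variable β, with parameters M, n, v, α) evaluated at β = (M+1)/(2M) equals ((M−1)²n/(4M))·((M−1)²n + (n−1)(M+1)²v)·(1 + M + (M−1)α), and this value is strictly positive. -/
import Mathlib


/-- The quadratic `q(β)` (in `β`, with parameters `M, n, v, α`) from the
two-step stochastic stepsize schedule analysis. -/
noncomputable def qquad (M n v α β : ℝ) : ℝ :=
  M * n * ((M - 1) ^ 2 * n + (M + 1) ^ 2 * (n - 1) * v) * ((M - 1) * α + (M + 1)) * β ^ 2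
  + 2 * M * (2 * (M - 1) * M * n * ((n - 1) * v - n) * α ^ 2
      + (M + 1) * ((n - 1) * v - n) * ((3 - M) * n + (M - 1) * (n - 1) * v) * α
      + n * (n - (M - 4) * M * n - (M + 1) * (M + 3) * (n - 1) * v)) * β
  + (-2 * M * (M ^ 2 - 1) * n * ((n - 1) * v - n) * α ^ 2
      + (2 * (2 + M + 2 * M ^ 2 - M ^ 3) * n ^ 2 + (M - 3) * (M + 1) ^ 2 * (n - 1) * n * v
          - (M - 1) * (M + 1) ^ 2 * (n - 1) ^ 2 * v ^ 2) * α
      + 2 * (M + 1) ^ 2 * n * ((n - 1) * v - n))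

theorem stmt_5 (M : ℝ) (n : ℕ) (v : ℝ)
    (hM : 1 < M) (hn : 1 ≤ n) (hv : 0 ≤ v)
    (hbound : ((n : ℝ) - 1) * M * v ≤ (M - 1) * n)
    (α : ℝ) (hα : α ∈ Set.Ico (1 / M) 1) :
    qquad M (n : ℝ) v α ((M + 1) / (2 * M))
        = (M - 1) ^ 2 * (n : ℝ) / (4 * M)
            * ((M - 1) ^ 2 * (n : ℝ) + ((n : ℝ) - 1) * (M + 1) ^ 2 * v)
            * (1 + M + (M - 1) * α) ∧
    0 < qquad M (n : ℝ) v α ((M + 1) / (2 * M)) := by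
  have hM0 : (0:ℝ) < M := by linarith
  have heq : qquad M (n : ℝ) v α ((M + 1) / (2 * M))
      = (M - 1) ^ 2 * (n : ℝ) / (4 * M)
          * ((M - 1) ^ 2 * (n : ℝ) + ((n : ℝ) - 1) * (M + 1) ^ 2 * v)
          * (1 + M + (M - 1) * α) := by
    unfold qquad
    field_simp
    ring
  refine ⟨heq, ?_⟩
  rw [heq]
  have hn1 : (1:ℝ) ≤ (n:ℝ) := by exact_mod_cast hn
  have hα0 : 0 < α := lt_of_lt_of_le (by positivity : (0:ℝ) < 1/M) hα.1
  have h1 : 0 < (M - 1) ^ 2 * (n : ℝ) / (4 * M) := by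
    apply div_pos
    · nlinarith [sq_nonneg (M-1)]
    · linarith
  have h2 : 0 < (M - 1) ^ 2 * (n : ℝ) + ((n : ℝ) - 1) * (M + 1) ^ 2 * v := by
    have : 0 ≤ ((n : ℝ) - 1) * (M + 1) ^ 2 * v :=
      mul_nonneg (mul_nonneg (by linarith) (sq_nonneg _)) hv
    nlinarith [sq_nonneg (M-1)]
  have h3 : 0 < 1 + M + (M - 1) * α := by nlinarith
  exact mul_pos (mul_pos h1 h2) h3
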